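/- For every finite simple graph G and every integer r ≥ 3, the r-ASC index θ_r(G) equals 2r if and only if G is isomorphic to K_1 (the one-vertex graph). -/

import Mathlib

namespace AscPaper

open SimpleGraph

/-- The eccentricity of a vertex `u` in a graph `G`, as an extended natural number:
the supremum of distances from `u` to all vertices. -/
noncomputable def ecc {V : Type*} (G : SimpleGraph V) (u : V) : ℕ∞ :=
  ⨆ v, G.edist u v

/-- The radius of a graph: the minimum eccentricity over all vertices. -/
noncomputable def graphRadius {V : Type*} (G : SimpleGraph V) : ℕ∞ :=
  ⨅ u, ecc G u

/-- The diameter of a graph: the maximum eccentricity over all vertices. -/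
noncomputable def graphDiam {V : Type*} (G : SimpleGraph V) : ℕ∞ :=
  ⨆ u, ecc G u

/-- The eccentric set of `u`: all vertices at distance exactly `ecc G u` from `u`. -/
def eccSet {V : Type*} (G : SimpleGraph V) (u : V) : Set V :=
  {v | G.edist u v = ecc G u}

/-- `H` is an `r`-ASC (almost self-centered) graph: `H` is connected, has radius `r`,
and all but exactly two vertices are central (have eccentricity equal to the radius). -/
def IsASC {V : Type*} (r : ℕ) (H : SimpleGraph V) : Prop :=
  H.Connected ∧ graphRadius H = (r : ℕ∞) ∧
    {u : V | ecc H u ≠ graphRadius H}.ncard = 2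

/-- The `r`-ASC index of a graph `G`: the minimum number `k` of vertices that need to be
added to `G` so that the resulting graph is an `r`-ASC graph containing `G` as an
induced subgraph. -/
noncomputable def theta {V : Type*} (r : ℕ) (G : SimpleGraph V) : ℕ :=
  sInf {k : ℕ | ∃ H : SimpleGraph (V ⊕ Fin k), IsASC r H ∧
    ∀ u v : V, H.Adj (Sum.inl u) (Sum.inl v) ↔ G.Adj u v}

/-! ### Cyclic distance on `Z_m` as natural numbers `< m` -/

def cdist (m a b : ℕ) : ℕ := min (Nat.dist a b) (m - Nat.dist a b)

lemma cdist_comm (m a b : ℕ) : cdist m a b = cdist m b a := by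
  simp [cdist, Nat.dist_comm]

lemma cdist_le_r {r a b : ℕ} (hr : 3 ≤ r) (ha : a < 2*r) (hb : b < 2*r) :
    cdist (2*r) a b ≤ r := by
  simp only [cdist, Nat.dist]; omega

lemma cdist_eq_zero {r a b : ℕ} (hr : 3 ≤ r) (ha : a < 2*r) (hb : b < 2*r)
    (h : cdist (2*r) a b = 0) : a = b := by
  simp only [cdist, Nat.dist] at h; omega

lemma cdist_lip {r q a b : ℕ} (hr : 3 ≤ r) (hq : q < 2*r) (ha : a < 2*r) (hb : b < 2*r)
    (h : cdist (2*r) a b ≤ 1) :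
    Nat.dist (cdist (2*r) q a) (cdist (2*r) q b) ≤ 1 := by
  simp only [cdist, Nat.dist] at *; omega

lemma cdist_step {r a b : ℕ} (hr : 3 ≤ r) (ha : a < 2*r) (hb : b < 2*r)
    (h : cdist (2*r) a b ≠ 0) :
    ∃ c, c < 2*r ∧ cdist (2*r) a c = 1 ∧ cdist (2*r) c b + 1 = cdist (2*r) a b := by
  have key : ((if a + 1 = 2*r then 0 else a + 1) < 2*r ∧
        cdist (2*r) a (if a + 1 = 2*r then 0 else a + 1) = 1 ∧
        cdist (2*r) (if a + 1 = 2*r then 0 else a + 1) b + 1 = cdist (2*r) a b)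
      ∨ ((if a = 0 then 2*r - 1 else a - 1) < 2*r ∧
        cdist (2*r) a (if a = 0 then 2*r - 1 else a - 1) = 1 ∧
        cdist (2*r) (if a = 0 then 2*r - 1 else a - 1) b + 1 = cdist (2*r) a b) := by
    simp only [cdist, Nat.dist]
    split_ifs <;> (simp only [cdist, Nat.dist] at h; omega)
  rcases key with k | k
  exacts [⟨_, k⟩, ⟨_, k⟩]

lemma cdist_nbr {r a : ℕ} (hr : 3 ≤ r) (ha : a < 2*r) :
    ∃ c, c < 2*r ∧ cdist (2*r) a c = 1 := by
  refine ⟨if a + 1 = 2*r then 0 else a + 1, ?_⟩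
  simp only [cdist, Nat.dist]; split_ifs <;> omega

lemma cdist_antipode {r a : ℕ} (hr : 3 ≤ r) (ha : a < 2*r) :
    ∃ q, q < 2*r ∧ cdist (2*r) a q = r := by
  refine ⟨if a + r < 2*r then a + r else a - r, ?_⟩
  simp only [cdist, Nat.dist]; split_ifs <;> omega

lemma cdist_antipode_unique {r a q q' : ℕ} (hr : 3 ≤ r) (ha : a < 2*r) (hq : q < 2*r)
    (hq' : q' < 2*r) (h1 : cdist (2*r) a q = r) (h2 : cdist (2*r) a q' = r) : q = q' := by
  simp only [cdist, Nat.dist] at h1 h2; omega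

/-! ### Potential-function lower bound for edist -/

lemma dist_pot_le_edist {W : Type*} (H : SimpleGraph W) (f : W → ℕ)
    (hf : ∀ a b, H.Adj a b → Nat.dist (f a) (f b) ≤ 1) (u v : W) :
    (Nat.dist (f u) (f v) : ℕ∞) ≤ H.edist u v := by
  refine le_iInf fun p => ?_
  norm_cast
  induction p with
  | nil => simp
  | @cons a b c hab p ih =>
    have h1 := hf a b hab
    have h2 : Nat.dist (f a) (f c) ≤ Nat.dist (f a) (f b) + Nat.dist (f b) (f c) :=
      Nat.dist.triangle_inequality _ _ _
    simp only [Walk.length_cons]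
    omega

lemma adj_edist_le_one {W : Type*} {H : SimpleGraph W} {a b : W} (h : H.Adj a b) :
    H.edist a b ≤ 1 :=
  (edist_eq_one_iff_adj.mpr h).le


/-! ### The core construction lemma: a blown-up even cycle with a pendant vertex -/

theorem core_asc {W : Type*} (H : SimpleGraph W) (r : ℕ) (hr : 3 ≤ r)
    (pos : W → ℕ) (pend spec : W) (p0 q0 : ℕ)
    (hp0 : p0 < 2*r) (hq0 : q0 < 2*r) (hpq : cdist (2*r) p0 q0 = r)
    (hposlt : ∀ a, a ≠ pend → pos a < 2*r)
    (hadj1 : ∀ a b, a ≠ pend → b ≠ pend → H.Adj a b → cdist (2*r) (pos a) (pos b) ≤ 1)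
    (hadj2 : ∀ a b, a ≠ pend → b ≠ pend → a ≠ b → cdist (2*r) (pos a) (pos b) = 1 → H.Adj a b)
    (hpend1 : ∀ b, H.Adj pend b → b ≠ pend ∧ pos b = p0)
    (hpend2 : ∃ b, H.Adj pend b)
    (hfull : ∀ i, i < 2*r → ∃ a, a ≠ pend ∧ pos a = i)
    (hspec1 : spec ≠ pend) (hspec2 : pos spec = q0)
    (hsing : ∀ a, a ≠ pend → pos a = q0 → a = spec) :
    IsASC r H := by
  classical
  -- adjacency from positions at cyclic distance 1 (the `a ≠ b` hypothesis is automatic)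
  have hadj2' : ∀ a b, a ≠ pend → b ≠ pend → cdist (2*r) (pos a) (pos b) = 1 → H.Adj a b := by
    intro a b ha hb h1
    refine hadj2 a b ha hb (fun hab => ?_) h1
    subst hab
    simp only [cdist, Nat.dist] at h1
    omega
  -- upper bound along the cycle
  have ub_main : ∀ d a b, a ≠ pend → b ≠ pend → cdist (2*r) (pos a) (pos b) = d → 1 ≤ d →
      H.edist a b ≤ (d : ℕ∞) := by
    intro d
    induction d with
    | zero => intro a b _ _ _ h; omega
    | succ n ih =>
      intro a b ha hb hd _
      rcases Nat.eq_zero_or_pos n with hn | hn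
      · subst hn
        exact (adj_edist_le_one (hadj2' a b ha hb hd)).trans (by norm_num)
      · obtain ⟨c, hc, hc1, hc2⟩ := cdist_step hr (hposlt a ha) (hposlt b hb)
          (by rw [hd]; omega)
        obtain ⟨a', ha', hpa'⟩ := hfull c hc
        have adj : H.Adj a a' := hadj2' a a' ha ha' (by rw [hpa']; exact hc1)
        have h2 : cdist (2*r) (pos a') (pos b) = n := by rw [hpa']; omega
        calc H.edist a b ≤ H.edist a a' + H.edist a' b := SimpleGraph.edist_triangle
          _ ≤ 1 + (n : ℕ∞) := add_le_add (adj_edist_le_one adj) (ih a' b ha' hb h2 hn)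
          _ = ((n+1 : ℕ) : ℕ∞) := by push_cast; ring
  -- vertices in the same position are at distance at most 2
  have ub_same : ∀ a b, a ≠ pend → b ≠ pend → pos a = pos b → H.edist a b ≤ (2 : ℕ∞) := by
    intro a b ha hb hab
    by_cases heq : a = b
    · subst heq; simp [SimpleGraph.edist_self]
    · obtain ⟨c, hc, hc1⟩ := cdist_nbr hr (hposlt a ha)
      obtain ⟨a', ha', hpa'⟩ := hfull c hc
      have adj1 : H.Adj a a' := hadj2' a a' ha ha' (by rw [hpa']; exact hc1)
      have adj2 : H.Adj a' b := hadj2' a' b ha' hb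
        (by rw [hpa', ← hab, cdist_comm]; exact hc1)
      calc H.edist a b ≤ H.edist a a' + H.edist a' b := SimpleGraph.edist_triangle
        _ ≤ 1 + 1 := add_le_add (adj_edist_le_one adj1) (adj_edist_le_one adj2)
        _ = 2 := by norm_num
  -- distance bound r between non-pendant vertices
  have ub_r : ∀ a b, a ≠ pend → b ≠ pend → H.edist a b ≤ (r : ℕ∞) := by
    intro a b ha hb
    rcases Nat.eq_zero_or_pos (cdist (2*r) (pos a) (pos b)) with h0 | h0
    · refine (ub_same a b ha hb (cdist_eq_zero hr (hposlt a ha) (hposlt b hb) h0)).trans ?_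
      exact_mod_cast Nat.cast_le.mpr (show (2:ℕ) ≤ r by omega)
    · refine (ub_main _ a b ha hb rfl h0).trans ?_
      exact Nat.cast_le.mpr (cdist_le_r hr (hposlt a ha) (hposlt b hb))
  -- distances from the pendant vertex
  obtain ⟨b0, hb0adj⟩ := hpend2
  obtain ⟨hb0ne, hb0pos⟩ := hpend1 b0 hb0adj
  have ub_pend_core : ∀ t (k : ℕ), t ≠ pend → cdist (2*r) p0 (pos t) ≤ k → 2 ≤ k →
      H.edist pend t ≤ ((k + 1 : ℕ) : ℕ∞) := by
    intro t k ht hk hk2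
    by_cases hsame : pos t = p0
    · have h3 : ((3:ℕ):ℕ∞) ≤ ((k+1:ℕ):ℕ∞) := Nat.cast_le.mpr (by omega)
      calc H.edist pend t ≤ H.edist pend b0 + H.edist b0 t := SimpleGraph.edist_triangle
        _ ≤ 1 + 2 := add_le_add (adj_edist_le_one hb0adj)
            (ub_same b0 t hb0ne ht (by rw [hb0pos, hsame]))
        _ = ((3:ℕ):ℕ∞) := by norm_cast
        _ ≤ _ := h3
    · have hcd : 1 ≤ cdist (2*r) p0 (pos t) := by
        rcases Nat.eq_zero_or_pos (cdist (2*r) p0 (pos t)) with h0 | h0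
        · exact absurd (cdist_eq_zero hr hp0 (hposlt t ht) h0).symm hsame
        · exact h0
      calc H.edist pend t ≤ H.edist pend b0 + H.edist b0 t := SimpleGraph.edist_triangle
        _ ≤ 1 + (cdist (2*r) p0 (pos t) : ℕ∞) := add_le_add (adj_edist_le_one hb0adj)
            (ub_main _ b0 t hb0ne ht (by rw [hb0pos]) hcd)
        _ = ((1 + cdist (2*r) p0 (pos t) : ℕ) : ℕ∞) := by push_cast; ring
        _ ≤ _ := Nat.cast_le.mpr (by omega)
  have ub_pend_r1 : ∀ t, t ≠ pend → H.edist pend t ≤ ((r + 1 : ℕ) : ℕ∞) := by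
    intro t ht
    exact ub_pend_core t r ht (cdist_le_r hr hp0 (hposlt t ht)) (by omega)
  have ub_pend_r : ∀ t, t ≠ pend → pos t ≠ q0 → H.edist pend t ≤ (r : ℕ∞) := by
    intro t ht htq
    have h2 : cdist (2*r) p0 (pos t) ≠ r := fun h => htq
      (cdist_antipode_unique hr hp0 (hposlt t ht) hq0 h hpq)
    have h1 := cdist_le_r hr hp0 (hposlt t ht)
    have := ub_pend_core t (r-1) ht (by omega) (by omega)
    have heq : (r - 1) + 1 = r := by omega
    rwa [heq] at this
  -- potential functions
  have pot_lip : ∀ q : ℕ, q < 2*r → ∀ a b, H.Adj a b →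
      Nat.dist ((fun t => if t = pend then cdist (2*r) q p0 + 1 else cdist (2*r) q (pos t)) a)
        ((fun t => if t = pend then cdist (2*r) q p0 + 1 else cdist (2*r) q (pos t)) b) ≤ 1 := by
    intro q hq a b hab
    by_cases hap : a = pend
    · subst hap
      obtain ⟨hbne, hbpos⟩ := hpend1 b hab
      simp [if_neg hbne, hbpos, Nat.dist]
    · by_cases hbp : b = pend
      · subst hbp
        obtain ⟨hane, hapos⟩ := hpend1 a hab.symm
        simp [if_neg hane, hapos, Nat.dist]
      · simp only [if_neg hap, if_neg hbp]
        exact cdist_lip hr hq (hposlt a hap) (hposlt b hbp)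
          (hadj1 a b hap hbp hab)
  have lb_gen : ∀ q : ℕ, q < 2*r → ∀ u v : W,
      (Nat.dist (if u = pend then cdist (2*r) q p0 + 1 else cdist (2*r) q (pos u))
        (if v = pend then cdist (2*r) q p0 + 1 else cdist (2*r) q (pos v)) : ℕ∞)
        ≤ H.edist u v := by
    intro q hq u v
    exact dist_pot_le_edist H _ (pot_lip q hq) u v
  -- every non-pendant vertex has eccentricity at least r
  have lb_np : ∀ a, a ≠ pend → ∃ t, (r : ℕ∞) ≤ H.edist a t := by
    intro a ha
    obtain ⟨q, hq, hqa⟩ := cdist_antipode hr (hposlt a ha)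
    obtain ⟨t, ht, hpt⟩ := hfull q hq
    refine ⟨t, ?_⟩
    have := lb_gen q hq a t
    rw [if_neg ha, if_neg ht, hpt] at this
    have h1 : cdist (2*r) q (pos a) = r := by rw [cdist_comm]; exact hqa
    have h2 : cdist (2*r) q q = 0 := by simp [cdist, Nat.dist]
    rw [h1, h2] at this
    simpa [Nat.dist] using this
  have lb_pend_spec : ((r + 1 : ℕ) : ℕ∞) ≤ H.edist pend spec := by
    have := lb_gen q0 hq0 pend spec
    rw [if_pos rfl, if_neg hspec1, hspec2] at this
    have h1 : cdist (2*r) q0 p0 = r := by rw [cdist_comm]; exact hpq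
    have h2 : cdist (2*r) q0 q0 = 0 := by simp [cdist, Nat.dist]
    rw [h1, h2] at this
    simpa [Nat.dist] using this
  -- eccentricities
  have ecc_central : ∀ t, t ≠ pend → pos t ≠ q0 → ecc H t = (r : ℕ∞) := by
    intro t ht htq
    refine le_antisymm (iSup_le fun s => ?_) ?_
    · by_cases hsp : s = pend
      · subst hsp
        rw [SimpleGraph.edist_comm]
        exact ub_pend_r t ht htq
      · exact ub_r t s ht hsp
    · obtain ⟨s, hs⟩ := lb_np t ht
      exact hs.trans (le_iSup _ s)
  have ecc_spec : ecc H spec = ((r + 1 : ℕ) : ℕ∞) := by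
    refine le_antisymm (iSup_le fun s => ?_) ?_
    · by_cases hsp : s = pend
      · subst hsp
        rw [SimpleGraph.edist_comm]
        exact ub_pend_r1 spec hspec1
      · exact (ub_r spec s hspec1 hsp).trans (Nat.cast_le.mpr (show r ≤ r+1 by omega))
    · rw [SimpleGraph.edist_comm] at lb_pend_spec
      exact lb_pend_spec.trans (le_iSup _ pend)
  have ecc_pend : ecc H pend = ((r + 1 : ℕ) : ℕ∞) := by
    refine le_antisymm (iSup_le fun s => ?_) ?_
    · by_cases hsp : s = pend
      · subst hsp; simp [SimpleGraph.edist_self]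
      · exact ub_pend_r1 s hsp
    · exact lb_pend_spec.trans (le_iSup _ spec)
  -- radius
  have hp0q0 : p0 ≠ q0 := by
    intro h
    rw [h] at hpq
    simp [cdist, Nat.dist] at hpq
    omega
  obtain ⟨v0, hv0, hv0pos⟩ := hfull p0 hp0
  have rad : graphRadius H = (r : ℕ∞) := by
    refine le_antisymm ?_ (le_iInf fun u => ?_)
    · refine (iInf_le _ v0).trans ?_
      rw [ecc_central v0 hv0 (by rw [hv0pos]; exact hp0q0)]
    · by_cases hup : u = pend
      · subst hup; rw [ecc_pend]; exact Nat.cast_le.mpr (show r ≤ r+1 by omega)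
      · by_cases huq : pos u = q0
        · rw [hsing u hup huq, ecc_spec]; exact Nat.cast_le.mpr (show r ≤ r+1 by omega)
        · rw [ecc_central u hup huq]
  -- the set of non-central vertices
  have hset : {u : W | ecc H u ≠ graphRadius H} = {pend, spec} := by
    ext u
    simp only [Set.mem_setOf_eq, Set.mem_insert_iff, Set.mem_singleton_iff, rad]
    constructor
    · intro h
      by_cases hup : u = pend
      · exact Or.inl hup
      · by_cases huq : pos u = q0
        · exact Or.inr (hsing u hup huq)
        · exact absurd (ecc_central u hup huq) h
    · intro h
      have hne : ((r + 1 : ℕ) : ℕ∞) ≠ (r : ℕ∞) := by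
        intro hh
        have := Nat.cast_injective hh
        omega
      rcases h with h | h <;> subst h
      · rw [ecc_pend]; exact hne
      · rw [ecc_spec]; exact hne
  -- connectivity
  have hconn : H.Connected := by
    have hne : Nonempty W := ⟨pend⟩
    rw [SimpleGraph.connected_iff]
    refine ⟨fun a b => ?_, hne⟩
    have hfin : H.edist a b ≠ ⊤ := by
      have hle : H.edist a b ≤ ((r + 1 : ℕ) : ℕ∞) := by
        by_cases hap : a = pend
        · by_cases hbp : b = pend
          · rw [hap, hbp]; simp [SimpleGraph.edist_self]
          · rw [hap]; exact ub_pend_r1 b hbp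
        · by_cases hbp : b = pend
          · rw [hbp, SimpleGraph.edist_comm]
            exact ub_pend_r1 a hap
          · exact (ub_r a b hap hbp).trans (Nat.cast_le.mpr (show r ≤ r+1 by omega))
      exact ne_top_of_le_ne_top (ENat.coe_ne_top _) hle
    exact SimpleGraph.reachable_of_edist_ne_top hfin
  refine ⟨hconn, rad, ?_⟩
  rw [hset]
  exact Set.ncard_pair (Ne.symm hspec1)

/-! ### Lower bound machinery -/

lemma edist_coe_dist {W : Type*} {H : SimpleGraph W} {u v : W} (h : H.Reachable u v) :
    H.edist u v = (H.dist u v : ℕ∞) := by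
  rw [SimpleGraph.dist, ENat.coe_toNat (SimpleGraph.edist_ne_top_iff_reachable.mpr h)]

lemma nat_ivt (g : ℕ → ℕ) (L i : ℕ) (h0 : g 0 ≤ i) (hL : i ≤ g L)
    (hstep : ∀ j, j < L → g (j+1) ≤ g j + 1) : ∃ j, j ≤ L ∧ g j = i := by
  induction L with
  | zero => exact ⟨0, le_refl _, by omega⟩
  | succ n ih =>
    by_cases h : i ≤ g n
    · obtain ⟨j, hj, hji⟩ := ih h (fun j hj => hstep j (by omega))
      exact ⟨j, by omega, hji⟩
    · have := hstep n (by omega)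
      exact ⟨n+1, le_refl _, by omega⟩

lemma walk_take {W : Type*} {H : SimpleGraph W} :
    ∀ {u v : W} (p : H.Walk u v) (j : ℕ), ∃ q : H.Walk u (p.getVert j), q.length ≤ j := by
  intro u v p
  induction p with
  | nil => intro j; exact ⟨Walk.nil, by simp⟩
  | @cons a b c h q ih =>
    intro j
    cases j with
    | zero => exact ⟨Walk.nil, Nat.le_of_eq rfl⟩
    | succ n =>
      obtain ⟨q', hq'⟩ := ih n
      exact ⟨Walk.cons h q', by simpa using hq'⟩

lemma walk_drop {W : Type*} {H : SimpleGraph W} :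
    ∀ {u v : W} (p : H.Walk u v) (j : ℕ),
      ∃ q : H.Walk (p.getVert j) v, q.length ≤ p.length - j := by
  intro u v p
  induction p with
  | nil => intro j; exact ⟨Walk.nil, by simp⟩
  | @cons a b c h q ih =>
    intro j
    cases j with
    | zero => exact ⟨Walk.cons h q, Nat.le_of_eq rfl⟩
    | succ n =>
      obtain ⟨q', hq'⟩ := ih n
      refine ⟨q', hq'.trans ?_⟩
      simp only [Walk.length_cons]
      omega

/-- On any `t`–`y` geodesic there is a vertex at distance exactly `i` from `u`,
whenever `dist u t ≤ i ≤ dist u y`; the geodesic splits there. -/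
lemma pass_level {W : Type*} {H : SimpleGraph W} (hc : H.Connected) (u t y : W) (i : ℕ)
    (h1 : H.dist u t ≤ i) (h2 : i ≤ H.dist u y) :
    ∃ w, H.dist u w = i ∧ H.dist t w + H.dist w y = H.dist t y := by
  obtain ⟨p, hp⟩ := (hc t y).exists_walk_length_eq_dist
  have hstep : ∀ j, j < p.length → H.dist u (p.getVert (j+1)) ≤ H.dist u (p.getVert j) + 1 := by
    intro j hj
    have hadj := p.adj_getVert_succ hj
    have h3 := hc.dist_triangle (u := u) (v := p.getVert j) (w := p.getVert (j+1))
    have h4 : H.dist (p.getVert j) (p.getVert (j+1)) = 1 :=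
      SimpleGraph.dist_eq_one_iff_adj.mpr hadj
    omega
  obtain ⟨j, hj, hgj⟩ := nat_ivt (fun j => H.dist u (p.getVert j)) p.length i
    (by simpa using h1)
    (by show i ≤ H.dist u (p.getVert p.length); rw [Walk.getVert_length]; omega) hstep
  refine ⟨p.getVert j, hgj, ?_⟩
  obtain ⟨q1, hq1⟩ := walk_take p j
  obtain ⟨q2, hq2⟩ := walk_drop p j
  have d1 : H.dist t (p.getVert j) ≤ j := (SimpleGraph.dist_le q1).trans hq1
  have d2 : H.dist (p.getVert j) y ≤ p.length - j := (SimpleGraph.dist_le q2).trans hq2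
  have d3 := hc.dist_triangle (u := t) (v := p.getVert j) (w := y)
  omega

lemma step_toward {W : Type*} {H : SimpleGraph W} (hc : H.Connected) (a b : W)
    (h : 1 ≤ H.dist a b) : ∃ a', H.Adj a a' ∧ H.dist a' b + 1 = H.dist a b := by
  obtain ⟨p, hp⟩ := (hc a b).exists_walk_length_eq_dist
  cases p with
  | nil => rw [← hp] at h; simp at h
  | @cons a a' b hadj q =>
    refine ⟨a', hadj, ?_⟩
    have h1 : H.dist a' b ≤ q.length := SimpleGraph.dist_le q
    have h2 := hc.dist_triangle (u := a) (v := a') (w := b)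
    have h3 : H.dist a a' = 1 := SimpleGraph.dist_eq_one_iff_adj.mpr hadj
    have h4 : q.length + 1 = H.dist a b := by
      rw [← hp]; simp [Walk.length_cons]
    omega

/-- Every `r`-ASC graph (r ≥ 3) has at least `2r+1` vertices. -/
theorem asc_lower {W : Type*} [Fintype W] (H : SimpleGraph W) (r : ℕ) (hr : 3 ≤ r)
    (h : IsASC r H) : 2*r + 1 ≤ Fintype.card W := by
  classical
  obtain ⟨hc, hrad, hcard⟩ := h
  have hne : Nonempty W := hc.nonempty
  -- eccentricity is attained
  have hatt : ∀ w : W, ∃ t, ecc H w = (H.dist w t : ℕ∞) ∧ ∀ s, H.dist w s ≤ H.dist w t := by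
    intro w
    obtain ⟨t, ht⟩ := Finite.exists_max (fun s => H.dist w s)
    refine ⟨t, le_antisymm (iSup_le fun s => ?_) ?_, ht⟩
    · rw [edist_coe_dist (hc w s)]
      exact Nat.cast_le.mpr (ht s)
    · rw [← edist_coe_dist (hc w t)]
      exact le_iSup _ t
  choose T hT1 hT2 using hatt
  -- every vertex has eccentricity at least r
  have hE_ge : ∀ w, r ≤ H.dist w (T w) := by
    intro w
    have h1 : (r : ℕ∞) ≤ ecc H w := hrad ▸ iInf_le _ w
    rw [hT1 w] at h1
    exact_mod_cast h1
  -- the two non-central vertices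
  obtain ⟨u, v, huv_ne, hUV⟩ := Set.ncard_eq_two.mp hcard
  have hmemC : ∀ w : W, (ecc H w ≠ (r : ℕ∞)) ↔ (w = u ∨ w = v) := by
    intro w
    rw [← hrad]
    constructor
    · intro hw
      have : w ∈ {x : W | ecc H x ≠ graphRadius H} := hw
      rw [hUV] at this
      simpa using this
    · intro hw
      have : w ∈ ({u, v} : Set W) := by simpa using hw
      rw [← hUV] at this
      exact this
  have hcent : ∀ w, w ≠ u → w ≠ v → H.dist w (T w) = r := by
    intro w hwu hwv
    have h1 : ecc H w = (r : ℕ∞) := by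
      by_contra hcon
      rcases (hmemC w).mp hcon with h | h
      exacts [hwu h, hwv h]
    rw [hT1 w] at h1
    exact_mod_cast h1
  have hnc : ∀ w, r + 1 ≤ H.dist w (T w) → (w = u ∨ w = v) := by
    intro w hw
    refine (hmemC w).mp ?_
    rw [hT1 w]
    intro hcon
    have : H.dist w (T w) = r := by exact_mod_cast hcon
    omega
  -- diameter at most r+1
  have hdiam : ∀ a b : W, H.dist a b ≤ r + 1 := by
    intro a b
    by_contra hcon
    push_neg at hcon
    have hab : r + 2 ≤ H.dist a b := hcon
    have haU : a = u ∨ a = v := hnc a (by have := hT2 a b; omega)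
    have hbU : b = u ∨ b = v := by
      refine hnc b ?_
      have h1 := hT2 b a
      have h2 : H.dist b a = H.dist a b := SimpleGraph.dist_comm ..
      omega
    have habne : a ≠ b := by
      intro hcon2
      subst hcon2
      rw [SimpleGraph.dist_self] at hab
      omega
    obtain ⟨a', hadj, ha'⟩ := step_toward hc a b (by omega)
    have ha'U : a' = u ∨ a' = v := by
      refine hnc a' ?_
      have := hT2 a' b
      omega
    have ha'a : a' ≠ a := hadj.ne'
    have ha'b : a' ≠ b := by
      intro hcon2
      subst hcon2
      rw [SimpleGraph.dist_self] at ha'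
      omega
    rcases haU with h1 | h1 <;> rcases hbU with h2 | h2 <;> rcases ha'U with h3 | h3 <;>
      first
        | (exact habne (h1.trans h2.symm))
        | (exact ha'a (h3.trans h1.symm))
        | (exact ha'b (h3.trans h2.symm))
  -- dist u v = r + 1
  have hEu : H.dist u (T u) = r + 1 := by
    have h1 : ecc H u ≠ (r : ℕ∞) := (hmemC u).mpr (Or.inl rfl)
    rw [hT1 u] at h1
    have h2 : H.dist u (T u) ≠ r := fun hcon => h1 (by exact_mod_cast hcon)
    have h3 := hE_ge u
    have h4 := hdiam u (T u)
    omega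
  have huv : H.dist u v = r + 1 := by
    have h1 : T u = u ∨ T u = v := by
      refine hnc (T u) ?_
      have h2 := hT2 (T u) u
      have h3 : H.dist (T u) u = r + 1 := (SimpleGraph.dist_comm ..).trans hEu
      omega
    rcases h1 with h1 | h1
    · rw [h1] at hEu
      rw [SimpleGraph.dist_self] at hEu
      omega
    · rw [← h1]
      exact hEu
  
  -- in any level 2..r-1 (from x, where dist x y = r+1 and all vertices except x,y are
  -- central), there are at least two vertices
  have two_in_level : ∀ x y : W, H.dist x y = r + 1 →
      (∀ w, w ≠ x → w ≠ y → H.dist w (T w) = r) →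
      ∀ i, 2 ≤ i → i ≤ r - 1 →
      ∃ w w', w ≠ w' ∧ H.dist x w = i ∧ H.dist x w' = i := by
    intro x y hxy hcent' i hi2 hir
    obtain ⟨w, hw, -⟩ := pass_level hc x x y i (by rw [SimpleGraph.dist_self]; omega) (by omega)
    by_contra hcon
    push_neg at hcon
    have hsing : ∀ z, H.dist x z = i → z = w := by
      intro z hz
      by_contra hzw
      exact (hcon z w hzw hz) hw
    have hwx : w ≠ x := by
      intro hh; subst hh
      rw [SimpleGraph.dist_self] at hw
      omega
    have hwy : w ≠ y := by
      intro hh; subst hh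
      rw [hxy] at hw
      omega
    have hwcent := hcent' w hwx hwy
    set t := T w with ht
    by_cases hcase : i ≤ H.dist x t
    · -- geodesic from x to t passes through w; distance too large
      obtain ⟨w', hw'1, hw'2⟩ := pass_level hc x x t i (by rw [SimpleGraph.dist_self]; omega) hcase
      rw [hsing w' hw'1] at hw'2
      have hwt : H.dist w t = r := hwcent
      have := hdiam x t
      omega
    · -- t is before the cut; going from t to y must pass through w
      push_neg at hcase
      obtain ⟨w', hw'1, hw'2⟩ := pass_level hc x t y i (by omega) (by omega)
      rw [hsing w' hw'1] at hw'2
      -- dist w y = r + 1 - i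
      obtain ⟨w'', hw''1, hw''2⟩ := pass_level hc x x y i (by rw [SimpleGraph.dist_self]; omega) (by omega)
      rw [hsing w'' hw''1] at hw''2
      have hwt : H.dist w t = r := hwcent
      have htw : H.dist t w = r := (SimpleGraph.dist_comm ..).trans hwt
      have := hdiam t y
      omega
  -- counting
  by_contra hlow
  push_neg at hlow
  have hn : Fintype.card W ≤ 2*r := by omega
  have hcent_u : ∀ w, w ≠ u → w ≠ v → H.dist w (T w) = r := hcent
  have hcent_v : ∀ w, w ≠ v → w ≠ u → H.dist w (T w) = r := fun w h1 h2 => hcent w h2 h1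
  have hvu : H.dist v u = r + 1 := (SimpleGraph.dist_comm ..).trans huv
  -- the level-count function
  have level_ge : ∀ (x y : W), H.dist x y = r + 1 →
      (∀ w, w ≠ x → w ≠ y → H.dist w (T w) = r) →
      ∀ i ∈ Finset.range (r+2),
        (if 2 ≤ i ∧ i ≤ r - 1 then 2 else 1) ≤
          (Finset.univ.filter (fun w => H.dist x w = i)).card := by
    intro x y hxy hcent' i hi
    rw [Finset.mem_range] at hi
    by_cases hcase : 2 ≤ i ∧ i ≤ r - 1
    · rw [if_pos hcase]
      obtain ⟨w, w', hne', hw, hw'⟩ := two_in_level x y hxy hcent' i hcase.1 hcase.2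
      refine Finset.one_lt_card.mpr ⟨w, ?_, w', ?_, hne'⟩ <;>
        simp [Finset.mem_filter, hw, hw']
    · rw [if_neg hcase]
      obtain ⟨w, hw, -⟩ := pass_level hc x x y i (by rw [SimpleGraph.dist_self]; omega) (by omega)
      refine Finset.card_pos.mpr ⟨w, ?_⟩
      simp [Finset.mem_filter, hw]
  have level_sum : ∀ x : W, ∑ i ∈ Finset.range (r+2),
      (Finset.univ.filter (fun w => H.dist x w = i)).card = Fintype.card W := by
    intro x
    rw [← Finset.card_univ]
    exact (Finset.card_eq_sum_card_fiberwise (fun w _ => Finset.mem_range.mpr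
      (by have := hdiam x w; omega))).symm
  have lb_sum : ∑ i ∈ Finset.range (r+2), (if 2 ≤ i ∧ i ≤ r - 1 then 2 else 1) = 2*r := by
    have h1 : ∀ i ∈ Finset.range (r+2), (if 2 ≤ i ∧ i ≤ r - 1 then 2 else 1)
        = 1 + (if 2 ≤ i ∧ i ≤ r - 1 then 1 else 0) := by
      intro i _
      split_ifs <;> omega
    rw [Finset.sum_congr rfl h1, Finset.sum_add_distrib, Finset.sum_const, smul_eq_mul,
      ← Finset.sum_filter]
    have h2 : (Finset.range (r+2)).filter (fun i => 2 ≤ i ∧ i ≤ r - 1) = Finset.Ico 2 r := by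
      ext i
      simp only [Finset.mem_filter, Finset.mem_range, Finset.mem_Ico]
      omega
    rw [h2, Finset.sum_const, smul_eq_mul, Finset.card_range, Nat.card_Ico]
    omega
  -- the level profiles are exactly the lower bounds
  have profile : ∀ (x y : W), H.dist x y = r + 1 →
      (∀ w, w ≠ x → w ≠ y → H.dist w (T w) = r) →
      ∀ i ∈ Finset.range (r+2),
        (Finset.univ.filter (fun w => H.dist x w = i)).card
          = (if 2 ≤ i ∧ i ≤ r - 1 then 2 else 1) := by
    intro x y hxy hcent' i hi
    have hle := level_ge x y hxy hcent'
    have hsum : ∑ i ∈ Finset.range (r+2), (if 2 ≤ i ∧ i ≤ r - 1 then 2 else 1)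
        = ∑ i ∈ Finset.range (r+2),
          (Finset.univ.filter (fun w => H.dist x w = i)).card := by
      rw [lb_sum, level_sum x]
      have := Finset.sum_le_sum hle
      rw [lb_sum, level_sum x] at this
      omega
    exact ((Finset.sum_eq_sum_iff_of_le hle).mp hsum i hi).symm
  -- weighted sums
  have weighted : ∀ (x y : W), H.dist x y = r + 1 →
      (∀ w, w ≠ x → w ≠ y → H.dist w (T w) = r) →
      ∑ w : W, H.dist x w = r*r + r := by
    intro x y hxy hcent'
    have h1 : ∑ w : W, H.dist x w = ∑ i ∈ Finset.range (r+2),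
        ∑ w ∈ Finset.univ.filter (fun w => H.dist x w = i), H.dist x w :=
      (Finset.sum_fiberwise_of_maps_to (fun w _ => Finset.mem_range.mpr
        (by have := hdiam x w; omega)) _).symm
    have h2 : ∀ i ∈ Finset.range (r+2),
        ∑ w ∈ Finset.univ.filter (fun w => H.dist x w = i), H.dist x w
          = (if 2 ≤ i ∧ i ≤ r - 1 then 2 else 1) * i := by
      intro i hi
      have h3 : ∀ w ∈ Finset.univ.filter (fun w => H.dist x w = i), H.dist x w = i :=
        fun w hw => (Finset.mem_filter.mp hw).2
      rw [Finset.sum_congr rfl h3, Finset.sum_const, smul_eq_mul,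
        profile x y hxy hcent' i hi]
    rw [h1, Finset.sum_congr rfl h2]
    -- arithmetic: ∑_{i<r+2} lb i * i = r² + r
    have h4 : ∀ i ∈ Finset.range (r+2), (if 2 ≤ i ∧ i ≤ r - 1 then 2 else 1) * i
        = i + (if 2 ≤ i ∧ i ≤ r - 1 then i else 0) := by
      intro i _
      split_ifs <;> omega
    rw [Finset.sum_congr rfl h4, Finset.sum_add_distrib, ← Finset.sum_filter]
    have h5 : (Finset.range (r+2)).filter (fun i => 2 ≤ i ∧ i ≤ r - 1) = Finset.Ico 2 r := by
      ext i
      simp only [Finset.mem_filter, Finset.mem_range, Finset.mem_Ico]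
      omega
    rw [h5]
    obtain ⟨m, rfl⟩ : ∃ m, r = m + 3 := ⟨r - 3, by omega⟩
    have g1 : (∑ i ∈ Finset.range (m+3+2), i) * 2 = (m+5) * (m+4) :=
      Finset.sum_range_id_mul_two (m+3+2)
    have g3 : (∑ i ∈ Finset.Ico 0 (m+3), i) * 2 = (m+3) * (m+2) := by
      rw [← Finset.range_eq_Ico]
      exact Finset.sum_range_id_mul_two (m+3)
    have g2 : ∑ i ∈ Finset.Ico 0 2, i + ∑ i ∈ Finset.Ico 2 (m+3), i
        = ∑ i ∈ Finset.Ico 0 (m+3), i :=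
      Finset.sum_Ico_consecutive _ (by omega) (by omega)
    have g4 : (∑ i ∈ Finset.Ico 0 2, i) = 1 := by decide
    have key : (∑ i ∈ Finset.range (m+3+2), i + ∑ i ∈ Finset.Ico 2 (m+3), i) * 2 + 2
        = ((m+3) * (m+3) + (m+3)) * 2 + 2 := by
      calc (∑ i ∈ Finset.range (m+3+2), i + ∑ i ∈ Finset.Ico 2 (m+3), i) * 2 + 2
          = (∑ i ∈ Finset.range (m+3+2), i) * 2
            + (1 + ∑ i ∈ Finset.Ico 2 (m+3), i) * 2 := by ring
        _ = (∑ i ∈ Finset.range (m+3+2), i) * 2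
            + (∑ i ∈ Finset.Ico 0 2, i + ∑ i ∈ Finset.Ico 2 (m+3), i) * 2 := by rw [g4]
        _ = (∑ i ∈ Finset.range (m+3+2), i) * 2
            + (∑ i ∈ Finset.Ico 0 (m+3), i) * 2 := by rw [g2]
        _ = (m+5) * (m+4) + (m+3) * (m+2) := by rw [g1, g3]
        _ = ((m+3) * (m+3) + (m+3)) * 2 + 2 := by ring
    have key2 : (∑ i ∈ Finset.range (m+3+2), i + ∑ i ∈ Finset.Ico 2 (m+3), i) * 2
        = ((m+3) * (m+3) + (m+3)) * 2 := by omega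
    have key3 := Nat.eq_of_mul_eq_mul_right (show 0 < 2 by norm_num) key2
    omega
  -- pointwise equality: every vertex lies on a u-v geodesic
  have hsum_uv : ∑ w : W, (H.dist u w + H.dist w v) = (r+1) * (2*r) := by
    have e1 := weighted u v huv hcent_u
    have e2 := weighted v u hvu hcent_v
    have e3 : ∑ w : W, H.dist w v = r*r + r := by
      rw [Finset.sum_congr rfl (fun w _ => SimpleGraph.dist_comm ..)]
      exact e2
    rw [Finset.sum_add_distrib, e1, e3]
    ring
    -- card W = 2r
  have hn2 : 2*r ≤ Fintype.card W := by
    have hge2 := Finset.sum_le_sum (level_ge u v huv hcent_u)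
    rw [lb_sum, level_sum u] at hge2
    exact hge2
  have hcardW : Fintype.card W = 2*r := le_antisymm hn hn2
  -- pointwise: every vertex lies on a u-v geodesic
  have hpt : ∀ w : W, H.dist u w + H.dist w v = r + 1 := by
    by_contra hcon2
    push_neg at hcon2
    obtain ⟨w0, hw0⟩ := hcon2
    have hge : ∀ w : W, r + 1 ≤ H.dist u w + H.dist w v := by
      intro w
      have h1 := hc.dist_triangle (u := u) (v := w) (w := v)
      omega
    have hstrict : (Finset.univ : Finset W).sum (fun _ => r + 1)
        < (Finset.univ : Finset W).sum (fun w => H.dist u w + H.dist w v) :=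
      Finset.sum_lt_sum (fun w _ => hge w)
        ⟨w0, Finset.mem_univ w0, by have := hge w0; omega⟩
    rw [hsum_uv, Finset.sum_const, smul_eq_mul, Finset.card_univ, hcardW] at hstrict
    rw [Nat.mul_comm (r+1) (2*r)] at hstrict
    exact lt_irrefl _ hstrict
  -- levels 1 and r from u are singletons
  have hA := profile u v huv hcent_u
  have hA1 : (Finset.univ.filter (fun w => H.dist u w = 1)).card = 1 := by
    have h1 := hA 1 (Finset.mem_range.mpr (by omega))
    rw [h1, if_neg (by omega)]
  have hAr : (Finset.univ.filter (fun w => H.dist u w = r)).card = 1 := by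
    have h1 := hA r (Finset.mem_range.mpr (by omega))
    rw [h1, if_neg (by omega)]
  obtain ⟨w1, hw1⟩ := Finset.card_eq_one.mp hA1
  have hw1d : H.dist u w1 = 1 := by
    have h1 : w1 ∈ Finset.univ.filter (fun w => H.dist u w = 1) :=
      hw1 ▸ Finset.mem_singleton_self w1
    exact (Finset.mem_filter.mp h1).2
  have hw1u : ∀ z, H.dist u z = 1 → z = w1 := by
    intro z hz
    have h1 : z ∈ Finset.univ.filter (fun w => H.dist u w = 1) :=
      Finset.mem_filter.mpr ⟨Finset.mem_univ z, hz⟩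
    rw [hw1] at h1
    exact Finset.mem_singleton.mp h1
  obtain ⟨wr, hwr⟩ := Finset.card_eq_one.mp hAr
  have hwrd : H.dist u wr = r := by
    have h1 : wr ∈ Finset.univ.filter (fun w => H.dist u w = r) :=
      hwr ▸ Finset.mem_singleton_self wr
    exact (Finset.mem_filter.mp h1).2
  have hwru : ∀ z, H.dist u z = r → z = wr := by
    intro z hz
    have h1 : z ∈ Finset.univ.filter (fun w => H.dist u w = r) :=
      Finset.mem_filter.mpr ⟨Finset.mem_univ z, hz⟩
    rw [hwr] at h1
    exact Finset.mem_singleton.mp h1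
  -- a vertex at level 2
  obtain ⟨x2, hx2d, -⟩ := pass_level hc u u v 2
    (by rw [SimpleGraph.dist_self]; omega) (by omega)
  -- going through the singleton levels
  have key1 : ∀ t, 1 ≤ H.dist u t → H.dist w1 t + 1 = H.dist u t := by
    intro t ht
    obtain ⟨w, hw, hw2⟩ := pass_level hc u u t 1
      (by rw [SimpleGraph.dist_self]; omega) ht
    have hww : w = w1 := hw1u w hw
    subst hww
    omega
  have hwrv : H.dist wr v = 1 := by
    have h1 := hpt wr
    omega
  have keyr : ∀ t, H.dist u t ≤ r → H.dist t wr + H.dist u t = r := by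
    intro t ht
    obtain ⟨w, hw, hw2⟩ := pass_level hc u t v r ht (by omega)
    have hww : w = wr := hwru w hw
    subst hww
    have h1 := hpt t
    omega
  -- the level-2 vertex has eccentricity at most r-1 : contradiction with radius r
  have hall : ∀ t, H.dist x2 t ≤ r - 1 := by
    intro t
    have hj := hdiam u t
    by_cases h0 : H.dist u t = 0
    · have h1 : t = u := ((Connected.dist_eq_zero_iff hc (u := u) (v := t)).mp h0).symm
      subst h1
      have h2 : H.dist x2 t = 2 := by rw [SimpleGraph.dist_comm]; exact hx2d
      omega
    · by_cases hmid : H.dist u t ≤ r - 1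
      · have h1 := key1 t (by omega)
        have h2 : H.dist w1 x2 + 1 = 2 := by
          rw [key1 x2 (by omega)]
          exact hx2d
        have h3 := hc.dist_triangle (u := x2) (v := w1) (w := t)
        have h4 : H.dist x2 w1 = H.dist w1 x2 := SimpleGraph.dist_comm ..
        omega
      · by_cases hr' : H.dist u t = r
        · have h1 : t = wr := hwru t hr'
          subst h1
          have h2 := keyr x2 (by omega)
          have h3 : H.dist x2 t = H.dist x2 t := rfl
          omega
        · have htv : H.dist u t = r + 1 := by omega
          have h1 : t = u ∨ t = v := by
            refine hnc t ?_
            have h2 := hT2 t u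
            have h3 : H.dist t u = r + 1 := by rw [SimpleGraph.dist_comm]; exact htv
            omega
          rcases h1 with h | h
          · subst h
            rw [SimpleGraph.dist_self] at htv
            omega
          · subst h
            have h2 := hpt x2
            omega
  have h1 := hE_ge x2
  have h2 := hall (T x2)
  omega

/-! ### Constructions -/

lemma cdist_01 {r : ℕ} (hr : 3 ≤ r) : cdist (2*r) 0 r = r := by
  simp only [cdist, Nat.dist]; omega

/-- Construction for `K_1`: an even cycle `C_{2r}` plus the single vertex of `G`
as a pendant attached to the cycle vertex `0`. -/
theorem mem_S_one {V : Type*} [Fintype V] (G : SimpleGraph V) (r : ℕ) (hr : 3 ≤ r)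
    (hcard : Fintype.card V = 1) :
    ∃ H : SimpleGraph (V ⊕ Fin (2*r)), IsASC r H ∧
      ∀ u v : V, (H.Adj (Sum.inl u) (Sum.inl v) ↔ G.Adj u v) := by
  classical
  have hsub : Subsingleton V := Fintype.card_le_one_iff_subsingleton.mp (by omega)
  have hne : Nonempty V := Fintype.card_pos_iff.mp (by omega)
  obtain ⟨v0⟩ := hne
  have h2r : 0 < 2*r := by omega
  set H : SimpleGraph (V ⊕ Fin (2*r)) := SimpleGraph.fromRel (fun a b =>
    (∃ i j : Fin (2*r), a = Sum.inr i ∧ b = Sum.inr j ∧ cdist (2*r) (i:ℕ) (j:ℕ) = 1) ∨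
    (∃ (x : V) (i : Fin (2*r)), a = Sum.inl x ∧ b = Sum.inr i ∧ (i:ℕ) = 0)) with hH
  have hAdj : ∀ a b, H.Adj a b ↔ a ≠ b ∧
      (((∃ i j : Fin (2*r), a = Sum.inr i ∧ b = Sum.inr j ∧ cdist (2*r) (i:ℕ) (j:ℕ) = 1) ∨
        (∃ (x : V) (i : Fin (2*r)), a = Sum.inl x ∧ b = Sum.inr i ∧ (i:ℕ) = 0)) ∨
       ((∃ i j : Fin (2*r), b = Sum.inr i ∧ a = Sum.inr j ∧ cdist (2*r) (i:ℕ) (j:ℕ) = 1) ∨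
        (∃ (x : V) (i : Fin (2*r)), b = Sum.inl x ∧ a = Sum.inr i ∧ (i:ℕ) = 0))) := by
    intro a b
    rw [hH, SimpleGraph.fromRel_adj]
  refine ⟨H, ?_, ?_⟩
  · refine core_asc H r hr (Sum.elim (fun _ => 0) (fun i => (i:ℕ)))
      (Sum.inl v0) (Sum.inr ⟨r, by omega⟩) 0 r (by omega) (by omega) (cdist_01 hr)
      ?_ ?_ ?_ ?_ ?_ ?_ ?_ ?_ ?_
    · -- hposlt
      rintro (x | i) ha
      · exact absurd (congrArg Sum.inl (Subsingleton.elim x v0)) ha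
      · exact i.isLt
    · -- hadj1
      rintro (x | i) (y | j) ha hb hadj
      · exact absurd (congrArg Sum.inl (Subsingleton.elim x v0)) ha
      · exact absurd (congrArg Sum.inl (Subsingleton.elim x v0)) ha
      · exact absurd (congrArg Sum.inl (Subsingleton.elim y v0)) hb
      · rw [hAdj] at hadj
        obtain ⟨-, h⟩ := hadj
        rcases h with (⟨i', j', hi, hj, hc⟩ | ⟨x, i', hx, -, -⟩) |
          (⟨i', j', hi, hj, hc⟩ | ⟨x, i', hx, -, -⟩)
        · cases hi; cases hj; simpa using le_of_eq hc
        · exact absurd hx (by simp)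
        · cases hi; cases hj
          simp only [Sum.elim_inr]
          rw [cdist_comm]
          exact le_of_eq hc
        · exact absurd hx (by simp)
    · -- hadj2
      rintro (x | i) (y | j) ha hb hne hc
      · exact absurd (congrArg Sum.inl (Subsingleton.elim x v0)) ha
      · exact absurd (congrArg Sum.inl (Subsingleton.elim x v0)) ha
      · exact absurd (congrArg Sum.inl (Subsingleton.elim y v0)) hb
      · rw [hAdj]
        exact ⟨hne, Or.inl (Or.inl ⟨i, j, rfl, rfl, hc⟩)⟩
    · -- hpend1
      intro b hadj
      rw [hAdj] at hadj
      obtain ⟨hne, h⟩ := hadj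
      rcases h with (⟨i', j', hi, -, -⟩ | ⟨x, i', hx, hb, hi⟩) |
        (⟨i', j', -, hj, -⟩ | ⟨x, i', hx, hb, -⟩)
      · exact absurd hi (by simp)
      · subst hb
        refine ⟨by simp, ?_⟩
        simpa using hi
      · exact absurd hj (by simp)
      · exact absurd hb (by simp)
    · -- hpend2
      refine ⟨Sum.inr ⟨0, by omega⟩, ?_⟩
      rw [hAdj]
      exact ⟨by simp, Or.inl (Or.inr ⟨v0, ⟨0, by omega⟩, rfl, rfl, rfl⟩)⟩
    · -- hfull
      intro i hi
      exact ⟨Sum.inr ⟨i, hi⟩, by simp, rfl⟩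
    · -- spec ≠ pend
      simp
    · -- pos spec
      rfl
    · -- hsing
      rintro (x | i) ha hpos
      · exact absurd (congrArg Sum.inl (Subsingleton.elim x v0)) ha
      · simp only [Sum.elim_inr] at hpos
        congr 1
        exact Fin.ext hpos
  · -- induced condition (vacuous since |V| = 1)
    intro x y
    have hxy : x = y := Subsingleton.elim x y
    subst hxy
    constructor
    · intro h
      exact absurd rfl h.ne
    · intro h
      exact absurd rfl (G.ne_of_adj h)

lemma cdist_00 {m : ℕ} : cdist m 0 0 = 0 := by simp [cdist, Nat.dist]

/-- Construction when `G` has an edge `vstar ~ b0`: blow up position `0` of `C_{2r}`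
into `V \ {vstar}` and hang `vstar` from its `G`-neighbours. -/
theorem mem_S_edge {V : Type*} [Fintype V] (G : SimpleGraph V) (r : ℕ) (hr : 3 ≤ r)
    {vstar b0 : V} (he : G.Adj vstar b0) :
    ∃ H : SimpleGraph (V ⊕ Fin (2*r-1)), IsASC r H ∧
      ∀ u v : V, (H.Adj (Sum.inl u) (Sum.inl v) ↔ G.Adj u v) := by
  classical
  set pos : V ⊕ Fin (2*r-1) → ℕ := Sum.elim (fun _ => 0) (fun i => (i:ℕ) + 1) with hpos
  set H : SimpleGraph (V ⊕ Fin (2*r-1)) := SimpleGraph.fromRel (fun a b =>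
    (∃ x y : V, a = Sum.inl x ∧ b = Sum.inl y ∧ G.Adj x y) ∨
    (a ≠ Sum.inl vstar ∧ b ≠ Sum.inl vstar ∧ cdist (2*r) (pos a) (pos b) = 1)) with hH
  have hAdj : ∀ a b, H.Adj a b ↔ a ≠ b ∧
      (((∃ x y : V, a = Sum.inl x ∧ b = Sum.inl y ∧ G.Adj x y) ∨
        (a ≠ Sum.inl vstar ∧ b ≠ Sum.inl vstar ∧ cdist (2*r) (pos a) (pos b) = 1)) ∨
       ((∃ x y : V, b = Sum.inl x ∧ a = Sum.inl y ∧ G.Adj x y) ∨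
        (b ≠ Sum.inl vstar ∧ a ≠ Sum.inl vstar ∧ cdist (2*r) (pos b) (pos a) = 1))) := by
    intro a b
    rw [hH, SimpleGraph.fromRel_adj]
  have hind : ∀ u v : V, (H.Adj (Sum.inl u) (Sum.inl v) ↔ G.Adj u v) := by
    intro x y
    rw [hAdj]
    constructor
    · rintro ⟨hne, (⟨x', y', hx, hy, hG⟩ | ⟨-, -, hc⟩) | (⟨x', y', hx, hy, hG⟩ | ⟨-, -, hc⟩)⟩
      · cases hx; cases hy; exact hG
      · rw [hpos] at hc; simp only [Sum.elim_inl] at hc; rw [cdist_00] at hc; omega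
      · cases hx; cases hy; exact hG.symm
      · rw [hpos] at hc; simp only [Sum.elim_inl] at hc; rw [cdist_00] at hc; omega
    · intro h
      exact ⟨by simpa using G.ne_of_adj h, Or.inl (Or.inl ⟨x, y, rfl, rfl, h⟩)⟩
  refine ⟨H, ?_, hind⟩
  refine core_asc H r hr pos (Sum.inl vstar) (Sum.inr ⟨r-1, by omega⟩) 0 r
    (by omega) (by omega) (cdist_01 hr) ?_ ?_ ?_ ?_ ?_ ?_ ?_ ?_ ?_
  · -- hposlt
    rintro (x | i) _
    · simp only [hpos, Sum.elim_inl]; omega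
    · simp only [hpos, Sum.elim_inr]
      have := i.isLt
      omega
  · -- hadj1
    intro a b ha hb hadj
    rw [hAdj] at hadj
    obtain ⟨-, h⟩ := hadj
    rcases h with (⟨x, y, hx, hy, -⟩ | ⟨-, -, hc⟩) | (⟨x, y, hx, hy, -⟩ | ⟨-, -, hc⟩)
    · subst hx; subst hy
      simp only [hpos, Sum.elim_inl, cdist_00]
      omega
    · omega
    · subst hx; subst hy
      simp only [hpos, Sum.elim_inl, cdist_00]
      omega
    · rw [cdist_comm] at hc
      omega
  · -- hadj2
    intro a b ha hb hne hc
    rw [hAdj]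
    exact ⟨hne, Or.inl (Or.inr ⟨ha, hb, hc⟩)⟩
  · -- hpend1
    intro b hadj
    rw [hAdj] at hadj
    obtain ⟨hne, h⟩ := hadj
    rcases h with (⟨x, y, hx, hy, hG⟩ | ⟨ha, -, -⟩) | (⟨x, y, hx, hy, hG⟩ | ⟨-, ha, -⟩)
    · rw [Sum.inl.injEq] at hx
      subst hx; subst hy
      refine ⟨by simpa using hG.ne', by simp [hpos]⟩
    · exact absurd rfl ha
    · rw [Sum.inl.injEq] at hy
      subst hy; subst hx
      refine ⟨by simpa using hG.ne, by simp [hpos]⟩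
    · exact absurd rfl ha
  · -- hpend2
    refine ⟨Sum.inl b0, ?_⟩
    rw [hAdj]
    exact ⟨by simpa using G.ne_of_adj he, Or.inl (Or.inl ⟨vstar, b0, rfl, rfl, he⟩)⟩
  · -- hfull
    intro i hi
    rcases Nat.eq_zero_or_pos i with h0 | h0
    · subst h0
      exact ⟨Sum.inl b0, by simpa using he.ne', by simp [hpos]⟩
    · refine ⟨Sum.inr ⟨i-1, by omega⟩, by simp, ?_⟩
      simp only [hpos, Sum.elim_inr]
      omega
  · -- spec ≠ pend
    simp
  · -- pos spec = r
    simp only [hpos, Sum.elim_inr]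
    omega
  · -- hsing
    rintro (x | i) ha hposa
    · simp only [hpos, Sum.elim_inl] at hposa
      omega
    · simp only [hpos, Sum.elim_inr] at hposa
      congr 1
      refine Fin.ext ?_
      show (i:ℕ) = r - 1
      omega

/-- Construction when `G` has no edges and at least two vertices. -/
theorem mem_S_noedge {V : Type*} [Fintype V] (G : SimpleGraph V) (r : ℕ) (hr : 3 ≤ r)
    (hcard : 2 ≤ Fintype.card V) (hno : ∀ x y : V, ¬G.Adj x y) :
    ∃ H : SimpleGraph (V ⊕ Fin (2*r-1)), IsASC r H ∧
      ∀ u v : V, (H.Adj (Sum.inl u) (Sum.inl v) ↔ G.Adj u v) := by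
  classical
  obtain ⟨vstar, other, hvo⟩ := Fintype.exists_pair_of_one_lt_card (α := V) (by omega)
  set pos : V ⊕ Fin (2*r-1) → ℕ :=
    Sum.elim (fun x => if x = vstar then r else 0)
      (fun i => if (i:ℕ) < r then (i:ℕ) else (i:ℕ)+1) with hpos
  set pend : V ⊕ Fin (2*r-1) := Sum.inr ⟨0, by omega⟩ with hpend
  set H : SimpleGraph (V ⊕ Fin (2*r-1)) := SimpleGraph.fromRel (fun a b =>
    (a = pend ∧ b = Sum.inr ⟨1, by omega⟩) ∨
    (a ≠ pend ∧ b ≠ pend ∧ cdist (2*r) (pos a) (pos b) = 1)) with hH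
  have hAdj : ∀ a b, H.Adj a b ↔ a ≠ b ∧
      (((a = pend ∧ b = Sum.inr ⟨1, by omega⟩) ∨
        (a ≠ pend ∧ b ≠ pend ∧ cdist (2*r) (pos a) (pos b) = 1)) ∨
       ((b = pend ∧ a = Sum.inr ⟨1, by omega⟩) ∨
        (b ≠ pend ∧ a ≠ pend ∧ cdist (2*r) (pos b) (pos a) = 1))) := by
    intro a b
    rw [hH, SimpleGraph.fromRel_adj]
  have hind : ∀ u v : V, (H.Adj (Sum.inl u) (Sum.inl v) ↔ G.Adj u v) := by
    intro x y
    rw [hAdj]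
    constructor
    · rintro ⟨hne, (⟨hx, -⟩ | ⟨-, -, hc⟩) | (⟨-, hx⟩ | ⟨-, -, hc⟩)⟩
      · exact absurd hx (by simp [hpend])
      · exfalso
        rw [hpos] at hc
        simp only [Sum.elim_inl] at hc
        split_ifs at hc <;> (simp only [cdist, Nat.dist] at hc; omega)
      · exact absurd hx (by simp [hpend])
      · exfalso
        rw [hpos] at hc
        simp only [Sum.elim_inl] at hc
        split_ifs at hc <;> (simp only [cdist, Nat.dist] at hc; omega)
    · intro h
      exact absurd h (hno x y)
  refine ⟨H, ?_, hind⟩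
  have hq0 : cdist (2*r) 1 (r+1) = r := by
    simp only [cdist, Nat.dist]; omega
  refine core_asc H r hr pos pend (Sum.inr ⟨r, by omega⟩) 1 (r+1)
    (by omega) (by omega) hq0 ?_ ?_ ?_ ?_ ?_ ?_ ?_ ?_ ?_
  · -- hposlt
    rintro (x | i) _
    · simp only [hpos, Sum.elim_inl]
      split_ifs <;> omega
    · simp only [hpos, Sum.elim_inr]
      have := i.isLt
      split_ifs <;> omega
  · -- hadj1
    intro a b ha hb hadj
    rw [hAdj] at hadj
    obtain ⟨-, h⟩ := hadj
    rcases h with (⟨hx, -⟩ | ⟨-, -, hc⟩) | (⟨hx, -⟩ | ⟨-, -, hc⟩)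
    · exact absurd hx ha
    · omega
    · exact absurd hx hb
    · rw [cdist_comm] at hc
      omega
  · -- hadj2
    intro a b ha hb hne hc
    rw [hAdj]
    exact ⟨hne, Or.inl (Or.inr ⟨ha, hb, hc⟩)⟩
  · -- hpend1
    intro b hadj
    rw [hAdj] at hadj
    obtain ⟨hne, h⟩ := hadj
    rcases h with (⟨-, hb⟩ | ⟨ha, -, -⟩) | (⟨hb, ha⟩ | ⟨-, ha, -⟩)
    · subst hb
      constructor
      · rw [hpend]
        intro hcon
        rw [Sum.inr.injEq, Fin.mk.injEq] at hcon
        omega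
      · simp only [hpos, Sum.elim_inr]
        have h1r : (1:ℕ) < r := by omega
        simp [h1r]
    · exact absurd rfl ha
    · exfalso
      rw [hpend, Sum.inr.injEq, Fin.mk.injEq] at ha
      omega
    · exact absurd rfl ha
  · -- hpend2
    refine ⟨Sum.inr ⟨1, by omega⟩, ?_⟩
    rw [hAdj]
    refine ⟨?_, Or.inl (Or.inl ⟨rfl, rfl⟩)⟩
    rw [hpend]
    intro hcon
    rw [Sum.inr.injEq, Fin.mk.injEq] at hcon
    omega
  · -- hfull
    intro i hi
    rcases Nat.eq_zero_or_pos i with h0 | h0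
    · subst h0
      refine ⟨Sum.inl other, by simp [hpend], ?_⟩
      simp only [hpos, Sum.elim_inl]
      rw [if_neg hvo.symm]
    · by_cases hif : i = r
      · refine ⟨Sum.inl vstar, by simp [hpend], ?_⟩
        simp only [hpos, Sum.elim_inl, if_true]
        omega
      · by_cases hlt : i < r
        · refine ⟨Sum.inr ⟨i, by omega⟩, ?_, ?_⟩
          · rw [hpend]
            intro hcon
            rw [Sum.inr.injEq, Fin.mk.injEq] at hcon
            omega
          · simp only [hpos, Sum.elim_inr]
            show (if i < r then i else i + 1) = i
            rw [if_pos hlt]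
        · refine ⟨Sum.inr ⟨i-1, by omega⟩, ?_, ?_⟩
          · rw [hpend]
            intro hcon
            rw [Sum.inr.injEq, Fin.mk.injEq] at hcon
            omega
          · simp only [hpos, Sum.elim_inr]
            show (if i - 1 < r then i - 1 else i - 1 + 1) = i
            rw [if_neg (by omega)]
            omega
  · -- spec ≠ pend
    rw [hpend]
    intro hcon
    rw [Sum.inr.injEq, Fin.mk.injEq] at hcon
    omega
  · -- pos spec = r + 1
    simp only [hpos, Sum.elim_inr]
    show (if r < r then r else r + 1) = r + 1
    rw [if_neg (by omega)]
  · -- hsing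
    rintro (x | i) ha hposa
    · simp only [hpos, Sum.elim_inl] at hposa
      split_ifs at hposa <;> omega
    · simp only [hpos, Sum.elim_inr] at hposa
      have : (i:ℕ) = r := by
        by_cases hlt : (i:ℕ) < r
        · rw [if_pos hlt] at hposa; omega
        · rw [if_neg hlt] at hposa; omega
      congr 1
      exact Fin.ext this

/-- For every finite simple graph `G` and every integer `r ≥ 3`, the `r`-ASC index
`θ_r(G)` equals `2r` if and only if `G` is isomorphic to `K_1`. -/
theorem theta_eq_two_mul_iff {V : Type*} [Fintype V]
    (G : SimpleGraph V) (r : ℕ) (hr : 3 ≤ r) :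
    theta r G = 2 * r ↔ Nonempty (G ≃g (⊤ : SimpleGraph (Fin 1))) := by
  classical
  set S : Set ℕ := {k : ℕ | ∃ H : SimpleGraph (V ⊕ Fin k), IsASC r H ∧
    ∀ u v : V, H.Adj (Sum.inl u) (Sum.inl v) ↔ G.Adj u v} with hS
  have htheta : theta r G = sInf S := rfl
  have hlower : ∀ k ∈ S, 2*r + 1 ≤ Fintype.card V + k := by
    intro k hk
    obtain ⟨H, hH, -⟩ := hk
    have h1 := asc_lower H r hr hH
    rwa [Fintype.card_sum, Fintype.card_fin] at h1
  constructor
  · intro h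
    have hcV : Fintype.card V = 1 := by
      by_contra hc1
      rcases Nat.lt_or_ge (Fintype.card V) 1 with h0 | h1
      · have hc0 : Fintype.card V = 0 := by omega
        by_cases hSne : S.Nonempty
        · have hmem := Nat.sInf_mem hSne
          rw [htheta] at h
          rw [h] at hmem
          have h2 := hlower _ hmem
          omega
        · rw [Set.not_nonempty_iff_eq_empty] at hSne
          rw [htheta, hSne] at h
          rw [Nat.sInf_empty] at h
          omega
      · have hc2 : 2 ≤ Fintype.card V := by omega
        have hmem : (2*r - 1) ∈ S := by
          by_cases hedge : ∃ x y : V, G.Adj x y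
          · obtain ⟨x, y, hxy⟩ := hedge
            exact mem_S_edge G r hr hxy
          · push_neg at hedge
            exact mem_S_noedge G r hr hc2 (fun x y => hedge x y)
        have hle : sInf S ≤ 2*r - 1 := Nat.sInf_le hmem
        rw [htheta] at h
        omega
    have hsub : Subsingleton V := Fintype.card_le_one_iff_subsingleton.mp (by omega)
    have hequiv : V ≃ Fin 1 := Fintype.equivFinOfCardEq hcV
    refine ⟨⟨hequiv, @fun a b => ?_⟩⟩
    constructor
    · intro hadj
      exact absurd (Subsingleton.elim _ _) hadj.ne
    · intro hadj
      exact absurd (Subsingleton.elim a b) (G.ne_of_adj hadj)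
  · rintro ⟨iso⟩
    have hcV : Fintype.card V = 1 :=
      (Fintype.card_congr iso.toEquiv).trans (Fintype.card_fin 1)
    obtain ⟨H, hH, hind⟩ := mem_S_one G r hr hcV
    have hmem : (2*r) ∈ S := ⟨H, hH, hind⟩
    rw [htheta]
    refine le_antisymm (Nat.sInf_le hmem) ?_
    refine le_csInf ⟨2*r, hmem⟩ ?_
    intro k hk
    have h1 := hlower k hk
    omega

end AscPaper
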